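/- Let X and Y be independent identically distributed random vectors in ℝ^d with the exponential product density f(x) = e^{−∑_{i=1}^d x_i}·𝟙_{(0,∞)^d}(x). Then for every α ∈ (0,∞], h_α(X − Y) = h_α(X) + d·log 2. -/

import Mathlib

open Real MeasureTheory ENNReal

/-- Rényi entropy of order `α ∈ (0,∞]` of a density `f` on `ℝ^d`. -/
noncomputable def contRenyiEnt (d : ℕ) (α : ℝ≥0∞) (f : (Fin d → ℝ) → ℝ) : ℝ :=
  if α = ⊤ then -Real.log (essSup f volume)
  else if α = 1 then -∫ x, f x * Real.log (f x)
  else (1 - α.toReal)⁻¹ * Real.log (∫ x, f x ^ α.toReal)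

/-- The exponential product density on `ℝ^d`:
`f(x) = e^{−∑ xᵢ}` on `(0,∞)^d` and `0` elsewhere. -/
noncomputable def expProductDensity (d : ℕ) : (Fin d → ℝ) → ℝ :=
  fun x => if ∀ i, 0 < x i then Real.exp (-(∑ i, x i)) else 0

/-! ### One-dimensional densities -/

noncomputable def oneDimExp : ℝ → ℝ := fun t => if 0 < t then Real.exp (-t) else 0

noncomputable def oneDimLap : ℝ → ℝ := fun t => Real.exp (-|t|) / 2

lemma oe_nonneg (t : ℝ) : 0 ≤ oneDimExp t := by
  unfold oneDimExp; split <;> positivity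

lemma ol_nonneg (t : ℝ) : 0 ≤ oneDimLap t := by
  unfold oneDimLap; positivity

lemma ol_le_half (t : ℝ) : oneDimLap t ≤ 2⁻¹ := by
  unfold oneDimLap
  rw [div_le_iff₀ (by norm_num : (0:ℝ) < 2)]
  have := Real.exp_le_one_iff.mpr (neg_nonpos.mpr (abs_nonneg t))
  linarith

lemma expProduct_eq_prod (d : ℕ) (x : Fin d → ℝ) :
    expProductDensity d x = ∏ i, oneDimExp (x i) := by
  unfold expProductDensity oneDimExp
  by_cases h : ∀ i, 0 < x i
  · rw [if_pos h, Finset.prod_congr rfl (fun i _ => if_pos (h i)), ← Real.exp_sum]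
    rw [← Finset.sum_neg_distrib]
  · rw [if_neg h]
    push_neg at h
    obtain ⟨i, hi⟩ := h
    symm
    exact Finset.prod_eq_zero (Finset.mem_univ i) (if_neg (not_lt.mpr hi))

lemma oe_eq_indicator : oneDimExp = Set.indicator (Set.Ioi 0) (fun t => Real.exp (-t)) := by
  funext t
  simp only [oneDimExp, Set.indicator, Set.mem_Ioi]

/-! ### One-dimensional integrals -/

lemma integral_exp_neg_mul_Ioi (a : ℝ) {b : ℝ} (hb : 0 < b) :
    ∫ x in Set.Ioi a, Real.exp (-(b * x)) = Real.exp (-(b * a)) / b := by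
  have h := integral_comp_mul_left_Ioi (fun x => Real.exp (-x)) a hb
  simp only [smul_eq_mul] at h
  rw [h, integral_exp_neg_Ioi]
  ring

lemma integrable_oe : Integrable oneDimExp := by
  rw [oe_eq_indicator]
  refine IntegrableOn.integrable_indicator ?_ measurableSet_Ioi
  simpa using exp_neg_integrableOn_Ioi 0 one_pos

lemma integral_oe : ∫ t, oneDimExp t = 1 := by
  rw [oe_eq_indicator, integral_indicator measurableSet_Ioi, integral_exp_neg_Ioi_zero]

lemma integrableOn_exp_mul : IntegrableOn (fun s : ℝ => Real.exp (-s) * s) (Set.Ioi 0) := by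
  have h := Real.GammaIntegral_convergent (by norm_num : (0:ℝ) < 2)
  have h2 : (2:ℝ) - 1 = 1 := by norm_num
  rw [h2] at h
  simpa using h

lemma integral_exp_mul_Ioi' : ∫ s in Set.Ioi (0:ℝ), Real.exp (-s) * s = 1 := by
  have h := Real.Gamma_eq_integral (by norm_num : (0:ℝ) < 2)
  rw [Real.Gamma_two] at h
  have h2 : (2:ℝ) - 1 = 1 := by norm_num
  rw [h2] at h
  simpa using h.symm

lemma oe_log_eq : (fun t => oneDimExp t * Real.log (oneDimExp t))
    = Set.indicator (Set.Ioi 0) (fun t => -(Real.exp (-t) * t)) := by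
  funext t
  simp only [oneDimExp, Set.indicator, Set.mem_Ioi]
  by_cases ht : 0 < t
  · rw [if_pos ht, if_pos ht, Real.log_exp]; ring
  · rw [if_neg ht, if_neg ht, zero_mul]

lemma integrable_oe_log : Integrable (fun t => oneDimExp t * Real.log (oneDimExp t)) := by
  rw [oe_log_eq]
  exact IntegrableOn.integrable_indicator (Integrable.neg integrableOn_exp_mul) measurableSet_Ioi

lemma integral_oe_log : ∫ t, oneDimExp t * Real.log (oneDimExp t) = -1 := by
  rw [oe_log_eq, integral_indicator measurableSet_Ioi, integral_neg, integral_exp_mul_Ioi']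

lemma integral_oe_rpow {p : ℝ} (hp : 0 < p) : ∫ t, oneDimExp t ^ p = p⁻¹ := by
  have h : (fun t => oneDimExp t ^ p)
      = Set.indicator (Set.Ioi 0) (fun t => Real.exp (-(p * t))) := by
    funext t
    simp only [oneDimExp, Set.indicator, Set.mem_Ioi]
    by_cases ht : 0 < t
    · rw [if_pos ht, if_pos ht, Real.rpow_def_of_pos (Real.exp_pos _), Real.log_exp]
      ring_nf
    · rw [if_neg ht, if_neg ht, Real.zero_rpow hp.ne']
  rw [h, integral_indicator measurableSet_Ioi, integral_exp_neg_mul_Ioi 0 hp]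
  simp

lemma integral_abs_exp : ∫ t : ℝ, Real.exp (-|t|) = 2 := by
  rw [integral_comp_abs (f := fun s => Real.exp (-s)), integral_exp_neg_Ioi_zero]
  norm_num

lemma integral_abs_mul_exp : ∫ t : ℝ, |t| * Real.exp (-|t|) = 2 := by
  rw [integral_comp_abs (f := fun s => s * Real.exp (-s))]
  rw [show (fun s : ℝ => s * Real.exp (-s)) = fun s => Real.exp (-s) * s from
    funext fun s => mul_comm _ _]
  rw [integral_exp_mul_Ioi']
  norm_num

lemma integrable_exp_abs : Integrable (fun t : ℝ => Real.exp (-|t|)) := by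
  have h : (fun t : ℝ => Real.exp (-|t|))
      = Set.indicator (Set.Ici 0) (fun t => Real.exp (-t))
        + Set.indicator (Set.Iio 0) (fun t => Real.exp t) := by
    funext t
    rcases le_or_gt 0 t with ht | ht
    · simp [Set.indicator, ht, not_lt.mpr ht, abs_of_nonneg ht]
    · simp [Set.indicator, not_le.mpr ht, ht, abs_of_neg ht]
  rw [h]
  apply Integrable.add
  · refine IntegrableOn.integrable_indicator ?_ measurableSet_Ici
    rw [integrableOn_Ici_iff_integrableOn_Ioi]
    simpa using exp_neg_integrableOn_Ioi 0 one_pos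
  · exact ((integrableOn_exp_Iic 0).mono_set Set.Iio_subset_Iic_self).integrable_indicator
      measurableSet_Iio

lemma integrable_exp_abs_half : Integrable (fun t : ℝ => Real.exp (-(|t|/2))) := by
  have h : (fun t : ℝ => Real.exp (-(|t|/2)))
      = fun t : ℝ => (fun s : ℝ => Real.exp (-|s|)) (2⁻¹ * t) := by
    funext t
    simp only []
    rw [abs_mul, abs_of_pos (by norm_num : (0:ℝ) < 2⁻¹)]
    ring_nf
  rw [h]
  exact (integrable_comp_mul_left_iff _ (by norm_num : (2⁻¹:ℝ) ≠ 0)).mpr integrable_exp_abs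

lemma integrable_abs_mul_exp : Integrable (fun t : ℝ => |t| * Real.exp (-|t|)) := by
  refine (integrable_exp_abs_half.const_mul 2).mono
    ((continuous_abs.mul (Real.continuous_exp.comp continuous_abs.neg)).aestronglyMeasurable)
    (Filter.Eventually.of_forall fun t => ?_)
  set s := |t| with hs
  have hs0 : 0 ≤ s := abs_nonneg t
  have e1 : Real.exp (-s) = Real.exp (-(s/2)) * Real.exp (-(s/2)) := by
    rw [← Real.exp_add]; ring_nf
  have e2 : s/2 + 1 ≤ Real.exp (s/2) := Real.add_one_le_exp _
  have e3 : Real.exp (s/2) * Real.exp (-(s/2)) = 1 := by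
    rw [← Real.exp_add]; simp
  have e4 : 0 < Real.exp (-(s/2)) := Real.exp_pos _
  have key : s * Real.exp (-s) ≤ 2 * Real.exp (-(s/2)) := by
    nlinarith [mul_le_mul_of_nonneg_right e2 e4.le]
  rw [Real.norm_eq_abs, Real.norm_eq_abs, abs_of_nonneg (by positivity),
    abs_of_nonneg (by positivity)]
  exact key

lemma integrable_ol : Integrable oneDimLap := integrable_exp_abs.div_const 2

lemma integral_ol : ∫ t, oneDimLap t = 1 := by
  unfold oneDimLap
  rw [integral_div, integral_abs_exp]
  norm_num

lemma ol_log (t : ℝ) : oneDimLap t * Real.log (oneDimLap t)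
    = -(1/2 : ℝ) * (|t| * Real.exp (-|t|)) + (-(Real.log 2)/2) * Real.exp (-|t|) := by
  unfold oneDimLap
  rw [Real.log_div (Real.exp_ne_zero _) (by norm_num), Real.log_exp]
  ring

lemma integrable_ol_log : Integrable (fun t => oneDimLap t * Real.log (oneDimLap t)) := by
  simp_rw [ol_log]
  exact (integrable_abs_mul_exp.const_mul _).add (integrable_exp_abs.const_mul _)

lemma integral_ol_log : ∫ t, oneDimLap t * Real.log (oneDimLap t) = -(1 + Real.log 2) := by
  simp_rw [ol_log]
  rw [integral_add (integrable_abs_mul_exp.const_mul _) (integrable_exp_abs.const_mul _),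
    integral_const_mul, integral_const_mul, integral_abs_mul_exp, integral_abs_exp]
  ring

lemma integral_ol_rpow {p : ℝ} (hp : 0 < p) :
    ∫ t, oneDimLap t ^ p = 2 / (2 ^ p * p) := by
  have h : (fun t : ℝ => oneDimLap t ^ p)
      = fun t => (fun s : ℝ => Real.exp (-(p * s)) / 2 ^ p) |t| := by
    funext t
    simp only [oneDimLap]
    rw [Real.div_rpow (Real.exp_pos _).le (by norm_num : (0:ℝ) ≤ 2),
      Real.rpow_def_of_pos (Real.exp_pos _), Real.log_exp]
    ring_nf
  rw [h, integral_comp_abs (f := fun s : ℝ => Real.exp (-(p * s)) / 2 ^ p),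
    integral_div, integral_exp_neg_mul_Ioi 0 hp]
  rw [mul_zero, neg_zero, Real.exp_zero]
  have h2 : (0:ℝ) < 2 ^ p := Real.rpow_pos_of_pos (by norm_num) p
  field_simp

/-! ### Convolution identity -/

lemma conv_one (a : ℝ) : ∫ t, oneDimExp (a + t) * oneDimExp t = oneDimLap a := by
  have h : (fun t => oneDimExp (a + t) * oneDimExp t)
      = Set.indicator (Set.Ioi (max (-a) 0))
          (fun t => Real.exp (-a) * Real.exp (-(2*t))) := by
    funext t
    by_cases h1 : 0 < a + t <;> by_cases h2 : 0 < t
    · rw [Set.indicator_of_mem (by rw [Set.mem_Ioi, max_lt_iff]; exact ⟨by linarith, h2⟩)]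
      simp only [oneDimExp, if_pos h1, if_pos h2]
      rw [← Real.exp_add, ← Real.exp_add]
      ring_nf
    · rw [Set.indicator_of_notMem (by
        intro hmem; rw [Set.mem_Ioi, max_lt_iff] at hmem; exact h2 hmem.2)]
      simp only [oneDimExp, if_neg h2, mul_zero]
    · rw [Set.indicator_of_notMem (by
        intro hmem; rw [Set.mem_Ioi, max_lt_iff] at hmem; exact h1 (by linarith [hmem.1]))]
      simp only [oneDimExp, if_neg h1, zero_mul]
    · rw [Set.indicator_of_notMem (by
        intro hmem; rw [Set.mem_Ioi, max_lt_iff] at hmem; exact h2 hmem.2)]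
      simp only [oneDimExp, if_neg h1, zero_mul]
  rw [h, integral_indicator measurableSet_Ioi, integral_const_mul,
    integral_exp_neg_mul_Ioi _ two_pos]
  unfold oneDimLap
  rcases le_or_gt 0 a with ha | ha
  · rw [max_eq_right (neg_nonpos.mpr ha), abs_of_nonneg ha]
    simp only [mul_zero, neg_zero, Real.exp_zero]
    ring
  · rw [max_eq_left (by linarith : (0:ℝ) ≤ -a), abs_of_neg ha, neg_neg, ← mul_div_assoc,
      ← Real.exp_add]
    ring_nf

lemma conv_eq (d : ℕ) (z : Fin d → ℝ) :
    ∫ x, expProductDensity d (z + x) * expProductDensity d x = ∏ i, oneDimLap (z i) := by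
  have h : ∀ x : Fin d → ℝ, expProductDensity d (z + x) * expProductDensity d x
      = ∏ i, (oneDimExp (z i + x i) * oneDimExp (x i)) := by
    intro x
    rw [expProduct_eq_prod, expProduct_eq_prod, ← Finset.prod_mul_distrib]
    simp [Pi.add_apply]
  simp_rw [h]
  rw [integral_fintype_prod_volume_eq_prod (f := fun i t => oneDimExp (z i + t) * oneDimExp t)]
  exact Finset.prod_congr rfl fun i _ => conv_one (z i)

/-! ### Product entropy lemmas -/

lemma pi_rpow (d : ℕ) (u : ℝ → ℝ) (p : ℝ) (h0 : ∀ t, 0 ≤ u t) :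
    ∫ x : Fin d → ℝ, (∏ i, u (x i)) ^ p = (∫ t, u t ^ p) ^ d := by
  have h : ∀ x : Fin d → ℝ, (∏ i, u (x i)) ^ p = ∏ i, (u (x i)) ^ p := fun x =>
    (Real.finset_prod_rpow Finset.univ _ (fun i _ => h0 _) p).symm
  simp_rw [h]
  rw [integral_fintype_prod_volume_eq_pow (ι := Fin d) (fun t => u t ^ p)]
  simp

set_option maxHeartbeats 1000000 in
lemma pi_log_entropy (d : ℕ) (u : ℝ → ℝ)
    (hint : Integrable u) (hone : (∫ t, u t) = 1)
    (hlint : Integrable (fun t => u t * Real.log (u t))) :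
    ∫ x : Fin d → ℝ, (∏ i, u (x i)) * Real.log (∏ i, u (x i))
      = d * ∫ t, u t * Real.log (u t) := by
  have key : ∀ x : Fin d → ℝ, (∏ i, u (x i)) * Real.log (∏ i, u (x i))
      = ∑ i, ∏ j, (u (x j) * (if j = i then Real.log (u (x j)) else 1)) := by
    intro x
    have hprod : ∀ i : Fin d, ∏ j, (u (x j) * (if j = i then Real.log (u (x j)) else 1))
        = (∏ j, u (x j)) * Real.log (u (x i)) := by
      intro i
      rw [Finset.prod_mul_distrib,
        Finset.prod_ite_eq' Finset.univ i (fun j => Real.log (u (x j)))]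
      simp
    simp_rw [hprod]
    rw [← Finset.mul_sum]
    by_cases hz : ∀ j, u (x j) ≠ 0
    · rw [Real.log_prod (fun j _ => hz j)]
    · push_neg at hz
      obtain ⟨j, hj⟩ := hz
      rw [Finset.prod_eq_zero (Finset.mem_univ j) hj]
      ring
  simp_rw [key]
  have hintj : ∀ i j : Fin d,
      Integrable (fun t => u t * (if j = i then Real.log (u t) else 1)) := by
    intro i j
    by_cases hji : j = i
    · simpa [hji] using hlint
    · simpa [hji] using hint
  rw [integral_finset_sum (μ := volume) _ (fun i _ => Integrable.fintype_prod (fun j => hintj i j))]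
  have hterm : ∀ i : Fin d,
      (∫ x : Fin d → ℝ, ∏ j, (u (x j) * (if j = i then Real.log (u (x j)) else 1)))
        = ∫ t, u t * Real.log (u t) := by
    intro i
    rw [integral_fintype_prod_volume_eq_prod
      (f := fun j t => u t * (if j = i then Real.log (u t) else 1))]
    calc ∏ j : Fin d, ∫ t, u t * (if j = i then Real.log (u t) else 1)
        = ∏ j : Fin d, (if j = i then ∫ t, u t * Real.log (u t) else 1) := by
          refine Finset.prod_congr rfl fun j _ => ?_
          by_cases hji : j = i <;> simp [hji, hone]
      _ = ∫ t, u t * Real.log (u t) := by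
          rw [Finset.prod_ite_eq' Finset.univ i (fun _ => ∫ t, u t * Real.log (u t))]
          simp
  simp_rw [hterm]
  simp [Finset.sum_const, Finset.card_univ]

lemma frac_le (d : ℕ) {L : ℝ} (hL : 0 ≤ L) : (d:ℝ) * (L/(d+1)) ≤ L := by
  have hd : (0:ℝ) < d+1 := by positivity
  rw [mul_div_assoc', div_le_iff₀ hd]
  nlinarith

/-! ### Essential suprema -/

lemma essSup_pi_eq {d : ℕ} (f : (Fin d → ℝ) → ℝ) (C : ℝ) (hC : 0 < C)
    (h0 : ∀ x, 0 ≤ f x)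
    (h_le : ∀ x, f x ≤ C)
    (h_ge : ∀ c, 0 < c → c < C →
      ∃ ε > 0, ∀ x : Fin d → ℝ, (∀ i, x i ∈ Set.Ioo 0 ε) → c ≤ f x) :
    essSup f volume = C := by
  have hne : (volume : Measure (Fin d → ℝ)) ≠ 0 := by
    intro hz
    have h1 : (volume : Measure (Fin d → ℝ)) (Set.univ.pi fun _ : Fin d => Set.Ioo (0:ℝ) 1)
        = 0 := by rw [hz]; simp
    rw [volume_pi_pi] at h1
    simp [Real.volume_Ioo] at h1
  have hnb : Filter.NeBot (ae (volume : Measure (Fin d → ℝ))) := ae_neBot.mpr hne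
  refine le_antisymm ?_ ?_
  · exact Filter.limsup_le_of_le
      (Filter.isCoboundedUnder_le_of_le _ (fun x => h0 x))
      (Filter.Eventually.of_forall h_le)
  by_contra hlt
  push_neg at hlt
  set E := essSup f volume with hE
  set c := max ((E + C)/2) (C/2) with hc
  have hcC : c < C := by
    apply max_lt <;> [linarith; linarith]
  have hc0 : 0 < c := lt_of_lt_of_le (by linarith) (le_max_right _ _)
  have hcE : E < c := lt_of_lt_of_le (by linarith) (le_max_left _ _)
  obtain ⟨ε, hε, hS⟩ := h_ge c hc0 hcC
  have hbdd : Filter.IsBoundedUnder (· ≤ ·) (ae (volume : Measure (Fin d → ℝ))) f :=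
    Filter.isBoundedUnder_of ⟨C, h_le⟩
  have hae := ae_lt_of_essSup_lt hcE hbdd
  rw [Filter.eventually_iff, mem_ae_iff] at hae
  have hsub : (Set.univ.pi fun _ : Fin d => Set.Ioo (0:ℝ) ε) ⊆ {x | f x < c}ᶜ := by
    intro x hx
    simp only [Set.mem_compl_iff, Set.mem_setOf_eq, not_lt]
    exact hS x (fun i => hx i (Set.mem_univ i))
  have h0 : volume (Set.univ.pi fun _ : Fin d => Set.Ioo (0:ℝ) ε) = 0 :=
    measure_mono_null hsub hae
  rw [volume_pi_pi] at h0
  obtain ⟨i, -, hi⟩ := Finset.prod_eq_zero_iff.mp h0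
  rw [Real.volume_Ioo] at hi
  rw [ENNReal.ofReal_eq_zero] at hi
  linarith

lemma essSup_exp (d : ℕ) : essSup (expProductDensity d) volume = 1 := by
  apply essSup_pi_eq _ 1 one_pos
  · intro x
    rw [expProduct_eq_prod]
    exact Finset.prod_nonneg fun i _ => oe_nonneg _
  · intro x
    unfold expProductDensity
    split
    · next h =>
      refine Real.exp_le_one_iff.mpr (neg_nonpos.mpr ?_)
      exact Finset.sum_nonneg fun i _ => (h i).le
    · norm_num
  · intro c hc0 hc1
    have hL : 0 < -Real.log c := by
      have := Real.log_neg hc0 hc1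
      linarith
    refine ⟨-Real.log c / (d+1), by positivity, fun x hx => ?_⟩
    have hxpos : ∀ i, 0 < x i := fun i => (hx i).1
    unfold expProductDensity
    rw [if_pos hxpos]
    have hsum : ∑ i, x i ≤ -Real.log c := by
      calc ∑ i, x i ≤ ∑ _i : Fin d, (-Real.log c / (d+1)) :=
            Finset.sum_le_sum fun i _ => (hx i).2.le
        _ = d * (-Real.log c / (d+1)) := by
            rw [Finset.sum_const, Finset.card_univ, Fintype.card_fin, nsmul_eq_mul]
        _ ≤ -Real.log c := frac_le d hL.le
    calc c = Real.exp (Real.log c) := (Real.exp_log hc0).symm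
      _ ≤ Real.exp (-(∑ i, x i)) := Real.exp_le_exp.mpr (by linarith)

lemma essSup_lap (d : ℕ) :
    essSup (fun z : Fin d → ℝ => ∏ i, oneDimLap (z i)) volume = (2:ℝ)⁻¹ ^ d := by
  apply essSup_pi_eq _ _ (by positivity)
  · intro x
    exact Finset.prod_nonneg fun i _ => ol_nonneg _
  · intro x
    calc ∏ i, oneDimLap (x i) ≤ ∏ _i : Fin d, (2:ℝ)⁻¹ :=
          Finset.prod_le_prod (fun i _ => ol_nonneg _) (fun i _ => ol_le_half _)
      _ = (2:ℝ)⁻¹ ^ d := by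
          rw [Finset.prod_const, Finset.card_univ, Fintype.card_fin]
  · intro c hc0 hcC
    have hr1 : c * 2 ^ d < 1 := by
      have h2d : (0:ℝ) < 2 ^ d := by positivity
      have : (2:ℝ)⁻¹ ^ d * 2 ^ d = 1 := by
        rw [← mul_pow]
        norm_num
      calc c * 2 ^ d < (2:ℝ)⁻¹ ^ d * 2 ^ d := by gcongr
        _ = 1 := this
    have hr0 : 0 < c * 2 ^ d := by positivity
    have hL : 0 < -Real.log (c * 2 ^ d) := by
      have := Real.log_neg hr0 hr1
      linarith
    set L := -Real.log (c * 2 ^ d) with hLdef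
    refine ⟨L / (d+1), by positivity, fun x hx => ?_⟩
    set ε := L / (d+1) with hεdef
    have hε : 0 < ε := by positivity
    have step1 : ∀ i, Real.exp (-ε) / 2 ≤ oneDimLap (x i) := by
      intro i
      unfold oneDimLap
      have h1 : |x i| ≤ ε := by
        rw [abs_of_pos (hx i).1]
        exact (hx i).2.le
      gcongr
    calc c = Real.exp (Real.log (c * 2 ^ d)) / 2 ^ d := by
          rw [Real.exp_log hr0]
          field_simp
      _ ≤ Real.exp (-((d:ℝ) * ε)) / 2 ^ d := by
          have hd1 : (d:ℝ) * ε ≤ L := frac_le d hL.le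
          gcongr
          rw [hLdef] at hd1
          linarith
      _ = ∏ _i : Fin d, (Real.exp (-ε) / 2) := by
          rw [Finset.prod_const, Finset.card_univ, Fintype.card_fin, div_pow,
            ← Real.exp_nat_mul]
          ring_nf
      _ ≤ ∏ i, oneDimLap (x i) :=
          Finset.prod_le_prod (fun i _ => by positivity) (fun i _ => step1 i)

/-! ### Main theorem -/

theorem renyi_rogers_shephard_exponential_equality (d : ℕ) (α : ℝ≥0∞) (hα : 0 < α) :
    contRenyiEnt d α
        (fun z => ∫ x, expProductDensity d (z + x) * expProductDensity d x) =
      contRenyiEnt d α (expProductDensity d) + d * Real.log 2 := by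
  have hconv : (fun z => ∫ x, expProductDensity d (z + x) * expProductDensity d x)
      = fun z : Fin d → ℝ => ∏ i, oneDimLap (z i) := funext (conv_eq d)
  rw [hconv]
  by_cases htop : α = ⊤
  · subst htop
    simp only [contRenyiEnt, if_pos rfl]
    rw [essSup_lap, essSup_exp]
    rw [Real.log_pow, Real.log_inv]
    simp
  · by_cases hone : α = 1
    · subst hone
      simp only [contRenyiEnt, if_neg (by simp : (1:ℝ≥0∞) ≠ ⊤), if_pos rfl]
      have hf : ∀ x : Fin d → ℝ, expProductDensity d x * Real.log (expProductDensity d x)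
          = (∏ i, oneDimExp (x i)) * Real.log (∏ i, oneDimExp (x i)) := by
        intro x; rw [expProduct_eq_prod]
      simp_rw [hf]
      rw [pi_log_entropy d oneDimExp integrable_oe integral_oe integrable_oe_log,
        pi_log_entropy d oneDimLap integrable_ol integral_ol integrable_ol_log,
        integral_oe_log, integral_ol_log]
      norm_num
      ring
    · have hp : 0 < α.toReal := ENNReal.toReal_pos hα.ne' htop
      have hp1 : α.toReal ≠ 1 := fun h => hone ((ENNReal.toReal_eq_one_iff α).mp h)
      simp only [contRenyiEnt, if_neg htop, if_neg hone]
      set p := α.toReal with hpdef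
      simp_rw [expProduct_eq_prod]
      rw [pi_rpow d oneDimLap p ol_nonneg, pi_rpow d oneDimExp p oe_nonneg,
        integral_oe_rpow hp, integral_ol_rpow hp]
      have h2p : (0:ℝ) < 2 ^ p := Real.rpow_pos_of_pos (by norm_num) p
      rw [Real.log_pow, Real.log_pow, Real.log_div (by norm_num) (by positivity),
        Real.log_mul (by positivity) hp.ne', Real.log_rpow (by norm_num), Real.log_inv]
      have hne : (1:ℝ) - p ≠ 0 := fun h => hp1 (by linarith)
      field_simp
      ring
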